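/- Let f : ℝⁿ → ℝ be Lipschitz. Then there exists a σ-porous set A ⊆ ℝⁿ such that for every x ∉ A, directional derivatives of f act linearly at x: if f'(x,u) and f'(x,v) exist for u, v ∈ ℝⁿ, then for all a, b ∈ ℝ, the directional derivative f'(x, au+bv) exists and equals a·f'(x,u) + b·f'(x,v). -/

import Mathlib

open Filter Topology Metric Set

/-- Two-sided directional derivative of `f` at `x` in direction `v`. -/
def HasDirDeriv {n : ℕ} (f : EuclideanSpace ℝ (Fin n) → ℝ)
    (x v : EuclideanSpace ℝ (Fin n)) (L : ℝ) : Prop :=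
  Tendsto (fun t : ℝ => (f (x + t • v) - f x) / t) (𝓝[≠] (0 : ℝ)) (𝓝 L)

/-- A set `E` is porous: for some `lam > 0`, every point of `E` has arbitrarily
close points `x ≠ a` with `B(x, lam * |a - x|)` disjoint from `E`. -/
def IsPorousSet {n : ℕ} (E : Set (EuclideanSpace ℝ (Fin n))) : Prop :=
  ∃ lam : ℝ, 0 < lam ∧ ∀ a ∈ E, ∀ ε : ℝ, 0 < ε → ∃ x : EuclideanSpace ℝ (Fin n),
    x ≠ a ∧ dist x a < ε ∧ Metric.ball x (lam * dist a x) ∩ E = ∅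

/-- A set is σ-porous if it is a countable union of porous sets. -/
def IsSigmaPorous {n : ℕ} (E : Set (EuclideanSpace ℝ (Fin n))) : Prop :=
  ∃ P : ℕ → Set (EuclideanSpace ℝ (Fin n)), (∀ k, IsPorousSet (P k)) ∧ E = ⋃ k, P k

namespace StmtAux

variable {n : ℕ}

def ratVec (q : Fin n → ℚ) : EuclideanSpace ℝ (Fin n) := WithLp.toLp 2 (fun i => (q i : ℝ))

noncomputable def qshift (g : EuclideanSpace ℝ (Fin n) → ℝ)
    (x u v : EuclideanSpace ℝ (Fin n)) (t : ℝ) : ℝ :=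
  (g (x + t • u + t • v) - g (x + t • u)) / t

def Eset (g : EuclideanSpace ℝ (Fin n) → ℝ)
    (u v : EuclideanSpace ℝ (Fin n)) (c ε δ : ℝ) : Set (EuclideanSpace ℝ (Fin n)) :=
  {x | 0 < ε ∧ 0 < δ ∧
    (∀ s : ℝ, s ≠ 0 → |s| ≤ δ → (g (x + s • v) - g x) / s < c + ε / 2) ∧
    ∀ r : ℝ, 0 < r → ∃ t : ℝ, 0 < t ∧ t < r ∧ c + ε < qshift g x u v t}

lemma lip_bound {K : NNReal} {g : EuclideanSpace ℝ (Fin n) → ℝ} (hg : LipschitzWith K g)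
    (y z : EuclideanSpace ℝ (Fin n)) : |g y - g z| ≤ ((K : ℝ) + 1) * ‖y - z‖ := by
  have h := hg.dist_le_mul y z
  rw [Real.dist_eq, dist_eq_norm] at h
  nlinarith [norm_nonneg (y - z)]

lemma exists_rat_close (w : EuclideanSpace ℝ (Fin n)) {η : ℝ} (hη : 0 < η) :
    ∃ q : Fin n → ℚ, ‖w - ratVec q‖ < η := by
  have h : ∀ i, ∃ q : ℚ, |w i - (q : ℝ)| < η / (n + 2) :=
    fun i => exists_rat_near _ (by positivity)
  choose q hq using h
  refine ⟨q, ?_⟩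
  rw [EuclideanSpace.norm_eq]
  have hsum : (∑ i, ‖(w - ratVec q) i‖ ^ 2)
      ≤ n * (η / (n + 2)) ^ 2 := by
    calc (∑ i, ‖(w - ratVec q) i‖ ^ 2)
        ≤ ∑ _i : Fin n, (η / (n + 2)) ^ 2 := by
          apply Finset.sum_le_sum
          intro i _
          have : ‖(w - ratVec q) i‖ = |w i - (q i : ℝ)| := by
            simp [ratVec, Real.norm_eq_abs]
          rw [this]
          have := (hq i).le
          nlinarith [abs_nonneg (w i - (q i : ℝ))]
      _ = n * (η / (n + 2)) ^ 2 := by simp [Finset.sum_const, Finset.card_fin]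
  have hlt : (∑ i, ‖(w - ratVec q) i‖ ^ 2) < η ^ 2 := by
    have h2 : (n : ℝ) * (η / (n + 2)) ^ 2 < η ^ 2 := by
      have hn : (0:ℝ) < (n:ℝ) + 2 := by positivity
      rw [div_pow, ← mul_div_assoc, div_lt_iff₀ (by positivity)]
      nlinarith [sq_nonneg η, sq_nonneg ((n:ℝ)+1)]
    linarith
  calc √(∑ i, ‖(w - ratVec q) i‖ ^ 2)
      < √(η ^ 2) := by
        apply Real.sqrt_lt_sqrt (by positivity) hlt
    _ = η := by rw [Real.sqrt_sq hη.le]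

lemma isPorousSet_Eset {K : NNReal} {g : EuclideanSpace ℝ (Fin n) → ℝ}
    (hg : LipschitzWith K g) (u v : EuclideanSpace ℝ (Fin n)) (c ε δ : ℝ) :
    IsPorousSet (Eset g u v c ε δ) := by
  set K' : ℝ := (K : ℝ) + 1 with hK'def
  have hK' : 0 < K' := by positivity
  have hL := fun y z => lip_bound hg y z
  by_cases hε : 0 < ε
  · by_cases hu : u = 0
    · refine ⟨1, one_pos, fun a ha => absurd ha ?_⟩
      rintro ⟨-, hδ, hC1, hC2⟩
      obtain ⟨t, ht0, htδ, htq⟩ := hC2 δ hδ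
      have h1 := hC1 t (ne_of_gt ht0) (by rw [abs_of_pos ht0]; linarith)
      rw [qshift, hu] at htq
      simp only [smul_zero, add_zero] at htq
      linarith
    · have hunorm : 0 < ‖u‖ := norm_pos_iff.2 hu
      refine ⟨ε / (4 * K' * ‖u‖), by positivity, ?_⟩
      intro a ha ρ hρ
      obtain ⟨-, hδ, hC1a, hC2⟩ := ha
      obtain ⟨t, ht0, htmin, htq⟩ := hC2 (min (ρ / ‖u‖) δ) (by positivity)
      have htδ : t < δ := lt_of_lt_of_le htmin (min_le_right _ _)
      have htρ : t * ‖u‖ < ρ := by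
        have h1 : t < ρ / ‖u‖ := lt_of_lt_of_le htmin (min_le_left _ _)
        rw [lt_div_iff₀ hunorm] at h1; exact h1
      have hxa : a + t • u ≠ a := by
        simp only [ne_eq, add_eq_left]
        exact smul_ne_zero (ne_of_gt ht0) hu
      have hdista : dist (a + t • u) a = t * ‖u‖ := by
        rw [dist_eq_norm, add_sub_cancel_left, norm_smul, Real.norm_eq_abs, abs_of_pos ht0]
      refine ⟨a + t • u, hxa, by rw [hdista]; exact htρ, ?_⟩
      rw [eq_empty_iff_forall_notMem]
      rintro y ⟨hyball, hyE⟩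
      obtain ⟨-, -, hyC1, -⟩ := hyE
      have hy1 : (g (y + t • v) - g y) / t < c + ε / 2 :=
        hyC1 t (ne_of_gt ht0) (by rw [abs_of_pos ht0]; exact htδ.le)
      have hy1' : g (y + t • v) - g y < t * (c + ε / 2) := by
        rw [div_lt_iff₀ ht0] at hy1; linarith [hy1]
      have hkey : t * (c + ε) < g (a + t • u + t • v) - g (a + t • u) := by
        rw [qshift, lt_div_iff₀ ht0] at htq; linarith [htq]
      have hdisty : ‖y - (a + t • u)‖ < ε * t / (4 * K') := by
        have h1 := mem_ball.1 hyball
        rw [dist_comm a, hdista] at h1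
        rw [← dist_eq_norm]
        calc dist y (a + t • u) < ε / (4 * K' * ‖u‖) * (t * ‖u‖) := h1
          _ = ε * t / (4 * K') := by field_simp
      have b1 : |g (y + t • v) - g (a + t • u + t • v)| ≤ K' * ‖y - (a + t • u)‖ := by
        have := hL (y + t • v) (a + t • u + t • v)
        rwa [add_sub_add_right_eq_sub] at this
      have b2 : |g y - g (a + t • u)| ≤ K' * ‖y - (a + t • u)‖ := hL y (a + t • u)
      have hmul : K' * ‖y - (a + t • u)‖ < ε * t / 4 := by
        have := mul_lt_mul_of_pos_left hdisty hK'
        calc K' * ‖y - (a + t • u)‖ < K' * (ε * t / (4 * K')) := this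
          _ = ε * t / 4 := by field_simp
      have hb1 := abs_le.1 b1
      have hb2 := abs_le.1 b2
      nlinarith [hb1.1, hb2.2, hkey, hmul, hy1']
  · refine ⟨1, one_pos, fun a ha => absurd ha.1 hε⟩

lemma ub {K : NNReal} {g : EuclideanSpace ℝ (Fin n) → ℝ} (hg : LipschitzWith K g)
    {x : EuclideanSpace ℝ (Fin n)}
    (hx : ∀ (u' v' : Fin n → ℚ) (c ε₀ δ : ℚ),
      x ∉ Eset g (ratVec u') (ratVec v') (c : ℝ) (ε₀ : ℝ) (δ : ℝ))
    (u v : EuclideanSpace ℝ (Fin n)) {Lv : ℝ} (hv : HasDirDeriv g x v Lv)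
    {ε : ℝ} (hε : 0 < ε) :
    ∀ᶠ t in 𝓝[>] (0:ℝ), qshift g x u v t < Lv + ε := by
  obtain ⟨K', hK'def⟩ : ∃ K' : ℝ, K' = (K : ℝ) + 1 := ⟨_, rfl⟩
  have hK' : 0 < K' := by rw [hK'def]; positivity
  have hL : ∀ y z, |g y - g z| ≤ K' * ‖y - z‖ := fun y z => by
    rw [hK'def]; exact lip_bound hg y z
  obtain ⟨η, hηdef⟩ : ∃ η : ℝ, η = ε / (8 * K') := ⟨_, rfl⟩
  have hη : 0 < η := by rw [hηdef]; positivity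
  have hK'η : K' * η = ε / 8 := by rw [hηdef]; field_simp
  obtain ⟨u', hu'⟩ := exists_rat_close (n := n) u hη
  obtain ⟨v', hv'⟩ := exists_rat_close (n := n) v hη
  obtain ⟨ε₀, hε₀pos, hε₀lt⟩ : ∃ ε₀ : ℚ, 0 < (ε₀ : ℝ) ∧ (ε₀ : ℝ) < ε / 8 :=
    exists_rat_btwn (show (0:ℝ) < ε / 8 by positivity)
  have hev : ∀ᶠ s in 𝓝[≠] (0:ℝ), |((g (x + s • v) - g x) / s) - Lv| < (ε₀ : ℝ) := by
    have := Metric.tendsto_nhds.1 hv (ε₀ : ℝ) hε₀pos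
    simpa [Real.dist_eq] using this
  rw [eventually_nhdsWithin_iff, Metric.eventually_nhds_iff] at hev
  obtain ⟨δ', hδ'pos, hδ'⟩ := hev
  obtain ⟨δ, hδpos, hδlt⟩ : ∃ δ : ℚ, 0 < (δ : ℝ) ∧ (δ : ℝ) < δ' :=
    exists_rat_btwn hδ'pos
  have hC1 : ∀ s : ℝ, s ≠ 0 → |s| ≤ (δ : ℝ) →
      (g (x + s • ratVec v') - g x) / s < Lv + (ε₀ : ℝ) + K' * η := by
    intro s hs hsδ
    have hdist : dist s (0:ℝ) < δ' := by
      rw [Real.dist_eq, sub_zero]; exact lt_of_le_of_lt hsδ hδlt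
    have h1 : |((g (x + s • v) - g x) / s) - Lv| < (ε₀ : ℝ) := hδ' hdist hs
    have h2 : |(g (x + s • ratVec v') - g (x + s • v)) / s| ≤ K' * ‖v - ratVec v'‖ := by
      rw [abs_div]
      have h3 := hL (x + s • ratVec v') (x + s • v)
      have h4 : ‖(x + s • ratVec v') - (x + s • v)‖ = |s| * ‖v - ratVec v'‖ := by
        rw [add_sub_add_left_eq_sub, ← smul_sub, norm_smul, Real.norm_eq_abs,
          norm_sub_rev]
      rw [h4] at h3
      rw [div_le_iff₀ (abs_pos.2 hs)]
      calc |g (x + s • ratVec v') - g (x + s • v)| ≤ K' * (|s| * ‖v - ratVec v'‖) := h3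
        _ = K' * ‖v - ratVec v'‖ * |s| := by ring
    have h5 : K' * ‖v - ratVec v'‖ < K' * η :=
      mul_lt_mul_of_pos_left hv' hK'
    have h6 : (g (x + s • ratVec v') - g x) / s
        = (g (x + s • ratVec v') - g (x + s • v)) / s + ((g (x + s • v) - g x) / s) := by
      rw [← add_div]; congr 1; ring
    have h7 := abs_lt.1 h1
    have h8 := (abs_le.1 h2).2
    rw [h6]
    linarith [h7.1, h7.2, h8, h5]
  obtain ⟨c, hc1, hc2⟩ : ∃ c : ℚ, Lv + (ε₀ : ℝ) + K' * η - (ε₀ : ℝ) / 2 < (c : ℝ) ∧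
      (c : ℝ) < Lv + (ε₀ : ℝ) + K' * η :=
    exists_rat_btwn (by linarith)
  have hnot := hx u' v' c ε₀ δ
  simp only [Eset, mem_setOf_eq, not_and] at hnot
  have hnC2 := hnot hε₀pos hδpos (fun s hs hsδ => by
    have := hC1 s hs hsδ
    linarith)
  push_neg at hnC2
  obtain ⟨r, hrpos, hr⟩ := hnC2
  have hIoo : Set.Ioo (0:ℝ) r ∈ 𝓝[>] (0:ℝ) :=
    Ioo_mem_nhdsGT_of_mem ⟨le_refl _, hrpos⟩
  filter_upwards [hIoo] with t ht
  obtain ⟨ht0, htr⟩ := ht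
  have h1 : qshift g x (ratVec u') (ratVec v') t ≤ (c : ℝ) + (ε₀ : ℝ) := hr t ht0 htr
  have h2 : |qshift g x u v t - qshift g x (ratVec u') (ratVec v') t|
      ≤ K' * (2 * ‖u - ratVec u'‖ + ‖v - ratVec v'‖) := by
    have e1 : ‖(x + t • u + t • v) - (x + t • ratVec u' + t • ratVec v')‖
        ≤ t * (‖u - ratVec u'‖ + ‖v - ratVec v'‖) := by
      have : (x + t • u + t • v) - (x + t • ratVec u' + t • ratVec v')
          = t • (u - ratVec u') + t • (v - ratVec v') := by
        simp only [smul_sub]; abel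
      rw [this]
      calc ‖t • (u - ratVec u') + t • (v - ratVec v')‖
          ≤ ‖t • (u - ratVec u')‖ + ‖t • (v - ratVec v')‖ := norm_add_le _ _
        _ = t * (‖u - ratVec u'‖ + ‖v - ratVec v'‖) := by
            rw [norm_smul, norm_smul, Real.norm_eq_abs, abs_of_pos ht0]; ring
    have e2 : ‖(x + t • u) - (x + t • ratVec u')‖ = t * ‖u - ratVec u'‖ := by
      rw [add_sub_add_left_eq_sub, ← smul_sub, norm_smul, Real.norm_eq_abs, abs_of_pos ht0]
    have b1 := hL (x + t • u + t • v) (x + t • ratVec u' + t • ratVec v')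
    have b2 := hL (x + t • u) (x + t • ratVec u')
    rw [e2] at b2
    have b1' : |g (x + t • u + t • v) - g (x + t • ratVec u' + t • ratVec v')|
        ≤ K' * (t * (‖u - ratVec u'‖ + ‖v - ratVec v'‖)) :=
      b1.trans (mul_le_mul_of_nonneg_left e1 hK'.le)
    have hnum : |(g (x + t • u + t • v) - g (x + t • u))
        - (g (x + t • ratVec u' + t • ratVec v') - g (x + t • ratVec u'))|
        ≤ K' * t * (2 * ‖u - ratVec u'‖ + ‖v - ratVec v'‖) := by
      calc |(g (x + t • u + t • v) - g (x + t • u))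
          - (g (x + t • ratVec u' + t • ratVec v') - g (x + t • ratVec u'))|
          = |(g (x + t • u + t • v) - g (x + t • ratVec u' + t • ratVec v'))
            - (g (x + t • u) - g (x + t • ratVec u'))| := by congr 1; ring
        _ ≤ |g (x + t • u + t • v) - g (x + t • ratVec u' + t • ratVec v')|
            + |g (x + t • u) - g (x + t • ratVec u')| := abs_sub _ _
        _ ≤ K' * (t * (‖u - ratVec u'‖ + ‖v - ratVec v'‖)) + K' * (t * ‖u - ratVec u'‖) :=
            add_le_add b1' b2
        _ = K' * t * (2 * ‖u - ratVec u'‖ + ‖v - ratVec v'‖) := by ring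
    have hq : qshift g x u v t - qshift g x (ratVec u') (ratVec v') t
        = ((g (x + t • u + t • v) - g (x + t • u))
          - (g (x + t • ratVec u' + t • ratVec v') - g (x + t • ratVec u'))) / t := by
      simp only [qshift]; ring
    rw [hq, abs_div, abs_of_pos ht0, div_le_iff₀ ht0]
    calc |(g (x + t • u + t • v) - g (x + t • u))
        - (g (x + t • ratVec u' + t • ratVec v') - g (x + t • ratVec u'))|
        ≤ K' * t * (2 * ‖u - ratVec u'‖ + ‖v - ratVec v'‖) := hnum
      _ = K' * (2 * ‖u - ratVec u'‖ + ‖v - ratVec v'‖) * t := by ring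
  have h3 : K' * (2 * ‖u - ratVec u'‖ + ‖v - ratVec v'‖) < 3 * (K' * η) := by
    nlinarith [hu', hv', hK']
  have h4 := (abs_le.1 h2).2
  linarith [h1, h3, h4, hc2, hK'η, hε₀lt, hε]

lemma hdd_smul {f : EuclideanSpace ℝ (Fin n) → ℝ} {x v : EuclideanSpace ℝ (Fin n)} {L : ℝ}
    (h : HasDirDeriv f x v L) (a : ℝ) : HasDirDeriv f x (a • v) (a * L) := by
  rcases eq_or_ne a 0 with rfl | ha
  · simp only [HasDirDeriv, zero_smul, smul_zero, add_zero, sub_self, zero_div, zero_mul]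
    exact tendsto_const_nhds
  · have hmap : Tendsto (fun t : ℝ => t * a) (𝓝[≠] (0:ℝ)) (𝓝[≠] (0:ℝ)) := by
      refine tendsto_nhdsWithin_of_tendsto_nhds_of_eventually_within _ ?_ ?_
      · have := (tendsto_id (x := 𝓝 (0:ℝ))).mul_const a
        simp only [id, zero_mul] at this
        exact this.mono_left nhdsWithin_le_nhds
      · filter_upwards [self_mem_nhdsWithin] with t ht
        exact mul_ne_zero ht ha
    have hcomp := (h.comp hmap).const_mul a
    refine hcomp.congr' ?_
    filter_upwards [self_mem_nhdsWithin] with t ht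
    have ht' : (t : ℝ) ≠ 0 := ht
    show a * ((f (x + (t * a) • v) - f x) / (t * a)) = (f (x + t • (a • v)) - f x) / t
    rw [smul_smul]
    field_simp

lemma hdd_negfun {f : EuclideanSpace ℝ (Fin n) → ℝ} {x v : EuclideanSpace ℝ (Fin n)} {L : ℝ}
    (h : HasDirDeriv f x v L) : HasDirDeriv (fun y => -f y) x v (-L) := by
  have := h.neg
  refine this.congr fun t => ?_
  ring

lemma qshift_negfun (f : EuclideanSpace ℝ (Fin n) → ℝ) (x u v : EuclideanSpace ℝ (Fin n))
    (t : ℝ) : qshift (fun y => -f y) x u v t = - qshift f x u v t := by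
  simp only [qshift]; ring

lemma qshift_neg_arg (f : EuclideanSpace ℝ (Fin n) → ℝ) (x u v : EuclideanSpace ℝ (Fin n))
    (t : ℝ) : qshift f x (-u) (-v) (-t) = - qshift f x u v t := by
  simp only [qshift, smul_neg, neg_smul, neg_neg, neg_div, div_neg]

lemma shift {K : NNReal} {f : EuclideanSpace ℝ (Fin n) → ℝ} (hf : LipschitzWith K f)
    {x : EuclideanSpace ℝ (Fin n)}
    (hxf : ∀ (u' v' : Fin n → ℚ) (c ε₀ δ : ℚ),
      x ∉ Eset f (ratVec u') (ratVec v') (c : ℝ) (ε₀ : ℝ) (δ : ℝ))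
    (hxg : ∀ (u' v' : Fin n → ℚ) (c ε₀ δ : ℚ),
      x ∉ Eset (fun y => -f y) (ratVec u') (ratVec v') (c : ℝ) (ε₀ : ℝ) (δ : ℝ))
    (u v : EuclideanSpace ℝ (Fin n)) {Lv : ℝ} (hv : HasDirDeriv f x v Lv) :
    Tendsto (qshift f x u v) (𝓝[≠] (0:ℝ)) (𝓝 Lv) := by
  rw [Metric.tendsto_nhds]
  intro ε hε
  have hε2 : 0 < ε / 2 := by linarith
  have hgL : LipschitzWith K (fun y => -f y) := by
    have := hf.neg
    exact this
  have R : ∀ (u v : EuclideanSpace ℝ (Fin n)) (Lv : ℝ), HasDirDeriv f x v Lv →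
      ∀ᶠ t in 𝓝[>] (0:ℝ), |qshift f x u v t - Lv| < ε := by
    intro u v Lv hv
    have h1 := ub hf hxf u v hv hε2
    have h2 := ub hgL hxg u v (hdd_negfun hv) hε2
    filter_upwards [h1, h2] with t h1t h2t
    rw [qshift_negfun] at h2t
    rw [abs_lt]
    constructor <;> linarith
  have hsup : 𝓝[<] (0:ℝ) ⊔ 𝓝[>] (0:ℝ) = 𝓝[≠] (0:ℝ) := nhdsLT_sup_nhdsGT 0
  simp only [Real.dist_eq]
  rw [← hsup, eventually_sup]
  constructor
  · have hneg : Tendsto (fun t : ℝ => -t) (𝓝[<] (0:ℝ)) (𝓝[>] (0:ℝ)) := by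
      refine tendsto_nhdsWithin_of_tendsto_nhds_of_eventually_within _ ?_ ?_
      · have h0 : Tendsto (fun t : ℝ => -t) (𝓝 (0:ℝ)) (𝓝 (-(0:ℝ))) :=
          (continuous_neg.tendsto (0:ℝ))
        rw [neg_zero] at h0
        exact h0.mono_left nhdsWithin_le_nhds
      · filter_upwards [self_mem_nhdsWithin] with t ht
        exact Set.mem_Ioi.2 (neg_pos.2 (Set.mem_Iio.1 ht))
    have hR := R (-u) (-v) (-Lv) (by simpa using hdd_smul hv (-1))
    have := hneg.eventually hR
    filter_upwards [this] with t ht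
    rw [qshift_neg_arg] at ht
    calc |qshift f x u v t - Lv| = |-qshift f x u v t - -Lv| := by rw [← abs_neg]; congr 1; ring
      _ < ε := ht
  · exact R u v Lv hv

lemma add_deriv {K : NNReal} {f : EuclideanSpace ℝ (Fin n) → ℝ} (hf : LipschitzWith K f)
    {x : EuclideanSpace ℝ (Fin n)}
    (hxf : ∀ (u' v' : Fin n → ℚ) (c ε₀ δ : ℚ),
      x ∉ Eset f (ratVec u') (ratVec v') (c : ℝ) (ε₀ : ℝ) (δ : ℝ))
    (hxg : ∀ (u' v' : Fin n → ℚ) (c ε₀ δ : ℚ),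
      x ∉ Eset (fun y => -f y) (ratVec u') (ratVec v') (c : ℝ) (ε₀ : ℝ) (δ : ℝ))
    {u v : EuclideanSpace ℝ (Fin n)} {Lu Lv : ℝ}
    (hu : HasDirDeriv f x u Lu) (hv : HasDirDeriv f x v Lv) :
    HasDirDeriv f x (u + v) (Lu + Lv) := by
  have h2 := shift hf hxf hxg u v hv
  have := hu.add h2
  refine this.congr fun t => ?_
  have hxx : x + t • (u + v) = x + t • u + t • v := by rw [smul_add, add_assoc]
  simp only [qshift, hxx]
  rw [← add_div]
  congr 1
  ring

end StmtAux

open StmtAux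

theorem stmt_11 {n : ℕ} (f : EuclideanSpace ℝ (Fin n) → ℝ) (K : NNReal)
    (hf : LipschitzWith K f) :
    ∃ A : Set (EuclideanSpace ℝ (Fin n)), IsSigmaPorous A ∧
      ∀ x ∉ A, ∀ (u v : EuclideanSpace ℝ (Fin n)) (Lu Lv : ℝ),
        HasDirDeriv f x u Lu → HasDirDeriv f x v Lv →
        ∀ a b : ℝ, HasDirDeriv f x (a • u + b • v) (a * Lu + b * Lv) := by
  classical
  have hgL : LipschitzWith K (fun y => -f y) := by
    have := hf.neg; exact this
  set Fam : ((Fin n → ℚ) × (Fin n → ℚ) × ℚ × ℚ × ℚ × Bool) → Set (EuclideanSpace ℝ (Fin n)) :=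
    fun p => Eset (if p.2.2.2.2.2 then f else (fun y => -f y))
      (ratVec p.1) (ratVec p.2.1) (p.2.2.1 : ℝ) (p.2.2.2.1 : ℝ) (p.2.2.2.2.1 : ℝ) with hFam
  obtain ⟨e, he⟩ := exists_surjective_nat ((Fin n → ℚ) × (Fin n → ℚ) × ℚ × ℚ × ℚ × Bool)
  have hP : ∀ p, IsPorousSet (Fam p) := by
    rintro ⟨u', v', c, ε₀, δ, b⟩
    cases b
    · exact isPorousSet_Eset hgL _ _ _ _ _
    · exact isPorousSet_Eset hf _ _ _ _ _
  refine ⟨⋃ k, Fam (e k), ⟨fun k => Fam (e k), fun k => hP (e k), rfl⟩, ?_⟩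
  · intro x hxA u v Lu Lv hu hv a b
    have hx' : ∀ p, x ∉ Fam p := by
      intro p hp
      obtain ⟨k, hk⟩ := he p
      exact hxA (Set.mem_iUnion.2 ⟨k, by rw [hk]; exact hp⟩)
    have hxf : ∀ (u' v' : Fin n → ℚ) (c ε₀ δ : ℚ),
        x ∉ Eset f (ratVec u') (ratVec v') (c : ℝ) (ε₀ : ℝ) (δ : ℝ) := by
      intro u' v' c ε₀ δ
      exact hx' (u', v', c, ε₀, δ, true)
    have hxg : ∀ (u' v' : Fin n → ℚ) (c ε₀ δ : ℚ),
        x ∉ Eset (fun y => -f y) (ratVec u') (ratVec v') (c : ℝ) (ε₀ : ℝ) (δ : ℝ) := by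
      intro u' v' c ε₀ δ
      exact hx' (u', v', c, ε₀, δ, false)
    exact add_deriv hf hxf hxg (hdd_smul hu a) (hdd_smul hv b)
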